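/- In the setting of the block-decomposition lemma, assume additionally that ∇_t extends to a flat meromorphic connection ∇ : E → E ⊗ Ω¹_{ℂ[[s]]((t))/ℂ}(∗st) (i.e. including the ∂_s direction, with flatness [∇(∂_s), ∇(t^{k+1}∂_t)] = 0). Then the decomposition E = E^{(1)} ⊕ E^{(2)} obtained from ∇_t is also ∇(∂_s)-stable, i.e. flat for the full connection ∇. -/

import Mathlib

/-!
Statement 6 (Lemma `07.9.19.14` of the paper).

Setting of the block-decomposition lemma: `E = (ℂ[[s,t]])^{n₁+n₂}` with
`ℂ[[s,t]] = PowerSeries (PowerSeries ℂ)` (outer variable `t`), and the `∇_t`-flat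
decomposition is realized in a compatible frame, so the matrix `Amat` of `∇(t^{k+1}∂_t)` is
block diagonal, `Amat = A₁ ⊕ A₂`; the eigenvalues of the two blocks of `F₀ = Amat mod t` lie
in `ℂ[[s]]` and their differences do not vanish at `s = 0`.  Assume `∇` extends to a flat
meromorphic connection including the `∂_s`-direction: in the same frame `∇(∂_s)` has matrix
`B = t^{-N} Cm` with `Cm` over `ℂ[[s,t]]`, and flatness `[∇(∂_s), ∇(t^{k+1}∂_t)] = 0` reads
(after multiplying by `t^N`)
`Amat Cm − Cm Amat + t^{k+1} ∂_t Cm − N t^k Cm + t^N ∂_s Amat = 0`.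
Then the decomposition is also `∇(∂_s)`-stable: the off-diagonal blocks of `Cm` (hence of `B`)
vanish.
-/

noncomputable section

open PowerSeries

local notation "𝔸" => PowerSeries (PowerSeries ℂ)

/-- the derivation `∂_s` on `ℂ[[s,t]] = (ℂ[[s]])[[t]]`, acting coefficientwise in `t` -/
def dS (a : 𝔸) : 𝔸 := PowerSeries.mk fun n => derivativeFun (coeff n a)

lemma aeval_comm_rect {S : Type*} [CommRing S] {m n : ℕ}
    (A : Matrix (Fin m) (Fin m) S) (B : Matrix (Fin n) (Fin n) S)
    (Y : Matrix (Fin m) (Fin n) S) (hY : A * Y = Y * B) (p : Polynomial S) :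
    (Polynomial.aeval A p) * Y = Y * (Polynomial.aeval B p) := by
  have hpow : ∀ r : ℕ, A ^ r * Y = Y * B ^ r := by
    intro r
    induction r with
    | zero => simp
    | succ r ih =>
        calc A ^ r * A * Y = A ^ r * (A * Y) := by rw [Matrix.mul_assoc]
          _ = A ^ r * (Y * B) := by rw [hY]
          _ = A ^ r * Y * B := by rw [Matrix.mul_assoc]
          _ = Y * B ^ r * B := by rw [ih]
          _ = Y * (B ^ r * B) := by rw [Matrix.mul_assoc]
  induction p using Polynomial.induction_on with
  | C a =>
      simp [Algebra.algebraMap_eq_smul_one, smul_mul_assoc, mul_smul_comm]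
  | add p q hp hq =>
      rw [map_add, map_add, Matrix.add_mul, Matrix.mul_add, hp, hq]
  | monomial r a _ =>
      simp only [map_mul, map_pow, Polynomial.aeval_X, Polynomial.aeval_C,
        Algebra.algebraMap_eq_smul_one, smul_mul_assoc, one_mul, mul_smul_comm]
      rw [Matrix.smul_mul, hpow (r + 1), Matrix.mul_smul]

lemma isUnit_aeval_prod {S : Type*} [CommRing S] {m : ℕ} {ι : Type*}
    (s : Finset ι) (f : ι → Polynomial S) (A : Matrix (Fin m) (Fin m) S)
    (h : ∀ i ∈ s, IsUnit (Polynomial.aeval A (f i))) :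
    IsUnit (Polynomial.aeval A (∏ i ∈ s, f i)) := by
  classical
  induction s using Finset.induction_on with
  | empty => simp
  | insert a s hx ih =>
      rw [Finset.prod_insert hx, map_mul]
      exact (h a (Finset.mem_insert_self a s)).mul
        (ih fun i hi => h i (Finset.mem_insert_of_mem hi))

lemma eval_charpoly_det {S : Type*} [CommRing S] {m : ℕ}
    (A : Matrix (Fin m) (Fin m) S) (b : S) :
    (A.charpoly).eval b = (Matrix.scalar (Fin m) b - A).det := by
  rw [Matrix.charpoly, eval_det, Matrix.matPolyEquiv_charmatrix]
  simp

lemma sylvester {m n : ℕ}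
    (A : Matrix (Fin m) (Fin m) (PowerSeries ℂ)) (B : Matrix (Fin n) (Fin n) (PowerSeries ℂ))
    (b₁ : Fin m → PowerSeries ℂ) (b₂ : Fin n → PowerSeries ℂ)
    (h₁ : A.charpoly = ∏ i, (Polynomial.X - Polynomial.C (b₁ i)))
    (h₂ : B.charpoly = ∏ j, (Polynomial.X - Polynomial.C (b₂ j)))
    (hsep : ∀ i j, constantCoeff (b₁ i - b₂ j) ≠ 0)
    (Y : Matrix (Fin m) (Fin n) (PowerSeries ℂ)) (hY : A * Y = Y * B) : Y = 0 := by
  have hunit : IsUnit (Polynomial.aeval A B.charpoly) := by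
    rw [h₂]
    apply isUnit_aeval_prod
    intro j _
    rw [map_sub, Polynomial.aeval_X, Polynomial.aeval_C, Matrix.isUnit_iff_isUnit_det]
    have h3 : A - algebraMap (PowerSeries ℂ) _ (b₂ j)
        = (-1 : PowerSeries ℂ) • (Matrix.scalar (Fin m) (b₂ j) - A) := by
      simp [Matrix.scalar, Algebra.algebraMap_eq_smul_one]
    rw [h3, Matrix.det_smul]
    apply IsUnit.mul
    · exact (isUnit_one.neg).pow _
    · rw [← eval_charpoly_det, h₁, Polynomial.eval_prod]
      simp only [Polynomial.eval_sub, Polynomial.eval_X, Polynomial.eval_C]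
      rw [PowerSeries.isUnit_iff_constantCoeff, map_prod]
      rw [isUnit_iff_ne_zero, Finset.prod_ne_zero_iff]
      intro i _ hzero
      apply hsep i j
      rw [map_sub] at hzero ⊢
      linear_combination -hzero
  have h0 : Polynomial.aeval A B.charpoly * Y = 0 := by
    rw [aeval_comm_rect A B Y hY, Matrix.aeval_self_charpoly, Matrix.mul_zero]
  obtain ⟨u, hu⟩ := hunit
  calc Y = (↑u⁻¹ : Matrix (Fin m) (Fin m) (PowerSeries ℂ)) * ((↑u : Matrix (Fin m) (Fin m) (PowerSeries ℂ)) * Y) := by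
        rw [← Matrix.mul_assoc, ← Units.val_mul, inv_mul_cancel, Units.val_one, Matrix.one_mul]
    _ = (↑u⁻¹ : Matrix (Fin m) (Fin m) (PowerSeries ℂ)) * (Polynomial.aeval A B.charpoly * Y) := by rw [hu]
    _ = 0 := by rw [h0, Matrix.mul_zero]


local notation "R" => PowerSeries ℂ

lemma block_vanish {n₁ n₂ k N : ℕ} (hk : 1 ≤ k)
    (A₁ : Matrix (Fin n₁) (Fin n₁) 𝔸) (A₂ : Matrix (Fin n₂) (Fin n₂) 𝔸)
    (b₁ : Fin n₁ → PowerSeries ℂ) (b₂ : Fin n₂ → PowerSeries ℂ)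
    (hchar₁ : (A₁.map ((constantCoeff : 𝔸 →+* PowerSeries ℂ))).charpoly
      = ∏ i, (Polynomial.X - Polynomial.C (b₁ i)))
    (hchar₂ : (A₂.map ((constantCoeff : 𝔸 →+* PowerSeries ℂ))).charpoly
      = ∏ j, (Polynomial.X - Polynomial.C (b₂ j)))
    (hsep : ∀ i j, constantCoeff (b₁ i - b₂ j) ≠ 0)
    (D : Matrix (Fin n₁) (Fin n₂) 𝔸)
    (hD : A₁ * D - D * A₂ + ((X : 𝔸) ^ (k + 1)) • D.map derivativeFun
      - ((N : 𝔸) * (X : 𝔸) ^ k) • D = 0) :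
    D = 0 := by
  suffices h : ∀ m, D.map ((coeff m : 𝔸 →ₗ[R] R)) = 0 by
    apply Matrix.ext
    intro i j
    apply PowerSeries.ext
    intro m
    simpa [Matrix.map_apply] using Matrix.ext_iff.mpr (h m) i j
  intro m
  induction m using Nat.strong_induction_on with
  | _ m IH =>
  have hIH : ∀ q < m, ∀ i j, (coeff q : 𝔸 →ₗ[R] R) (D i j) = 0 := by
    intro q hq i j
    simpa [Matrix.map_apply] using Matrix.ext_iff.mpr (IH q hq) i j
  have key : (A₁.map ((constantCoeff : 𝔸 →+* R))) * (D.map ((coeff m : 𝔸 →ₗ[R] R)))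
      = (D.map ((coeff m : 𝔸 →ₗ[R] R))) * (A₂.map ((constantCoeff : 𝔸 →+* R))) := by
    apply Matrix.ext
    intro i j
    have e1 : (coeff m : 𝔸 →ₗ[R] R) ((A₁ * D) i j)
        = ∑ x, (constantCoeff : 𝔸 →+* R) (A₁ i x) * (coeff m : 𝔸 →ₗ[R] R) (D x j) := by
      rw [Matrix.mul_apply, map_sum]
      apply Finset.sum_congr rfl
      intro x _
      rw [coeff_mul, Finset.sum_eq_single ((0 : ℕ), m)]
      · rw [coeff_zero_eq_constantCoeff]
      · rintro ⟨p1, p2⟩ hp hne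
        rw [Finset.HasAntidiagonal.mem_antidiagonal] at hp
        have hp2 : p2 < m := by
          rcases Nat.lt_or_ge p2 m with h | h
          · exact h
          · exfalso; apply hne
            have h2 : p2 = m := by omega
            have h1 : p1 = 0 := by omega
            simp [h1, h2]
        rw [hIH p2 hp2, mul_zero]
      · intro hnot
        exact absurd (Finset.HasAntidiagonal.mem_antidiagonal.mpr (zero_add m)) hnot
    have e2 : (coeff m : 𝔸 →ₗ[R] R) ((D * A₂) i j)
        = ∑ x, (coeff m : 𝔸 →ₗ[R] R) (D i x) * (constantCoeff : 𝔸 →+* R) (A₂ x j) := by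
      rw [Matrix.mul_apply, map_sum]
      apply Finset.sum_congr rfl
      intro x _
      rw [coeff_mul, Finset.sum_eq_single (m, (0 : ℕ))]
      · rw [coeff_zero_eq_constantCoeff]
      · rintro ⟨p1, p2⟩ hp hne
        rw [Finset.HasAntidiagonal.mem_antidiagonal] at hp
        have hp1 : p1 < m := by
          rcases Nat.lt_or_ge p1 m with h | h
          · exact h
          · exfalso; apply hne
            have h1 : p1 = m := by omega
            have h2 : p2 = 0 := by omega
            simp [h1, h2]
        rw [hIH p1 hp1, zero_mul]
      · intro hnot
        exact absurd (Finset.HasAntidiagonal.mem_antidiagonal.mpr (add_zero m)) hnot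
    have e3 : (coeff m : 𝔸 →ₗ[R] R) ((X : 𝔸) ^ (k + 1) * derivativeFun (D i j)) = 0 := by
      rw [coeff_mul]
      apply Finset.sum_eq_zero
      rintro ⟨p1, p2⟩ hp
      rw [Finset.HasAntidiagonal.mem_antidiagonal] at hp
      rw [coeff_X_pow]
      by_cases h : p1 = k + 1
      · subst h
        rw [if_pos rfl, one_mul]
        change coeff p2 (derivative _ (D i j)) = 0
        rw [coeff_derivative, hIH (p2 + 1) (by omega), zero_mul]
      · rw [if_neg h, zero_mul]
    have e4 : (coeff m : 𝔸 →ₗ[R] R) (((N : 𝔸) * (X : 𝔸) ^ k) * D i j) = 0 := by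
      have hre : ((N : 𝔸) * (X : 𝔸) ^ k) * D i j
          = ((X : 𝔸) ^ k * D i j) * (C : R →+* 𝔸) ((N : R)) := by
        rw [map_natCast (C : R →+* 𝔸) N]; ring
      have hz : (coeff m : 𝔸 →ₗ[R] R) ((X : 𝔸) ^ k * D i j) = 0 := by
        rw [coeff_mul]
        apply Finset.sum_eq_zero
        rintro ⟨p1, p2⟩ hp
        rw [Finset.HasAntidiagonal.mem_antidiagonal] at hp
        rw [coeff_X_pow]
        by_cases h : p1 = k
        · subst h
          rw [if_pos rfl, one_mul, hIH p2 (by omega)]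
        · rw [if_neg h, zero_mul]
      rw [hre, coeff_mul_C, hz, zero_mul]
    have h1 := congrArg ((coeff m : 𝔸 →ₗ[R] R)) (Matrix.ext_iff.mpr hD i j)
    simp only [Matrix.sub_apply, Matrix.add_apply, Matrix.smul_apply, Matrix.zero_apply,
      Matrix.map_apply, smul_eq_mul, map_sub, map_add, map_zero] at h1
    rw [e1, e2, e3, e4] at h1
    simp only [Matrix.mul_apply, Matrix.map_apply]
    linear_combination h1
  have := sylvester (A₁.map ((constantCoeff : 𝔸 →+* R))) (A₂.map ((constantCoeff : 𝔸 →+* R))) b₁ b₂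
    hchar₁ hchar₂ hsep (D.map ((coeff m : 𝔸 →ₗ[R] R))) key
  exact this

lemma dS_zero : dS 0 = 0 := by
  apply PowerSeries.ext
  intro n
  rw [dS, coeff_mk, map_zero]
  apply PowerSeries.ext
  intro p
  simp [derivativeFun]

theorem flat_decomposition_is_ds_stable
    (n₁ n₂ k N : ℕ) (hk : 1 ≤ k)
    (A₁ : Matrix (Fin n₁) (Fin n₁) 𝔸) (A₂ : Matrix (Fin n₂) (Fin n₂) 𝔸)
    (Amat : Matrix (Fin (n₁ + n₂)) (Fin (n₁ + n₂)) 𝔸)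
    (hAblock : Amat = Matrix.reindex finSumFinEquiv finSumFinEquiv
      (Matrix.fromBlocks A₁ 0 0 A₂))
    (b₁ : Fin n₁ → PowerSeries ℂ) (b₂ : Fin n₂ → PowerSeries ℂ)
    (hchar₁ : (A₁.map ((constantCoeff : 𝔸 →+* PowerSeries ℂ))).charpoly
      = ∏ i, (Polynomial.X - Polynomial.C (b₁ i)))
    (hchar₂ : (A₂.map ((constantCoeff : 𝔸 →+* PowerSeries ℂ))).charpoly
      = ∏ j, (Polynomial.X - Polynomial.C (b₂ j)))
    (hsep : ∀ i j, constantCoeff (b₁ i - b₂ j) ≠ 0)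
    (Cm : Matrix (Fin (n₁ + n₂)) (Fin (n₁ + n₂)) 𝔸)
    (hflat : Amat * Cm - Cm * Amat
        + ((X : 𝔸) ^ (k + 1)) • Cm.map derivativeFun
        - ((N : 𝔸) * (X : 𝔸) ^ k) • Cm
        + ((X : 𝔸) ^ N) • Amat.map dS = 0) :
    ∀ (i : Fin n₁) (j : Fin n₂),
      Cm (finSumFinEquiv (Sum.inl i)) (finSumFinEquiv (Sum.inr j)) = 0 ∧
      Cm (finSumFinEquiv (Sum.inr j)) (finSumFinEquiv (Sum.inl i)) = 0 := by
  have hAmat : ∀ (u v : Fin n₁ ⊕ Fin n₂),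
      Amat (finSumFinEquiv u) (finSumFinEquiv v) = Matrix.fromBlocks A₁ 0 0 A₂ u v := by
    intro u v
    rw [hAblock]
    simp [Matrix.reindex_apply, Matrix.submatrix_apply]
  have hA11 : ∀ (a : Fin n₁) (x : Fin n₁), Amat (Fin.castAdd n₂ a) (Fin.castAdd n₂ x) = A₁ a x := by
    intro a x; rw [hAblock]; simp
  have hA12 : ∀ (a : Fin n₁) (x : Fin n₂), Amat (Fin.castAdd n₂ a) (Fin.natAdd n₁ x) = 0 := by
    intro a x; rw [hAblock]; simp
  have hA21 : ∀ (a : Fin n₂) (x : Fin n₁), Amat (Fin.natAdd n₁ a) (Fin.castAdd n₂ x) = 0 := by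
    intro a x; rw [hAblock]; simp
  have hA22 : ∀ (a : Fin n₂) (x : Fin n₂), Amat (Fin.natAdd n₁ a) (Fin.natAdd n₁ x) = A₂ a x := by
    intro a x; rw [hAblock]; simp
  set D12 : Matrix (Fin n₁) (Fin n₂) 𝔸 :=
    Matrix.of (fun a b => Cm (finSumFinEquiv (Sum.inl a)) (finSumFinEquiv (Sum.inr b)))
    with hD12def
  set D21 : Matrix (Fin n₂) (Fin n₁) 𝔸 :=
    Matrix.of (fun a b => Cm (finSumFinEquiv (Sum.inr a)) (finSumFinEquiv (Sum.inl b)))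
    with hD21def
  have h12 : D12 = 0 := by
    apply block_vanish hk A₁ A₂ b₁ b₂ hchar₁ hchar₂ hsep (N := N)
    apply Matrix.ext
    intro a b
    have hE := Matrix.ext_iff.mpr hflat (finSumFinEquiv (Sum.inl a)) (finSumFinEquiv (Sum.inr b))
    have hmulAC : (Amat * Cm) (finSumFinEquiv (Sum.inl a)) (finSumFinEquiv (Sum.inr b))
        = (A₁ * D12) a b := by
      rw [Matrix.mul_apply, Matrix.mul_apply,
        ← Equiv.sum_comp finSumFinEquiv
          (fun x => Amat (finSumFinEquiv (Sum.inl a)) x * Cm x (finSumFinEquiv (Sum.inr b))),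
        Fintype.sum_sum_type]
      simp [hA11, hA12, hA21, hA22, hD12def]
    have hmulCA : (Cm * Amat) (finSumFinEquiv (Sum.inl a)) (finSumFinEquiv (Sum.inr b))
        = (D12 * A₂) a b := by
      rw [Matrix.mul_apply, Matrix.mul_apply,
        ← Equiv.sum_comp finSumFinEquiv
          (fun x => Cm (finSumFinEquiv (Sum.inl a)) x * Amat x (finSumFinEquiv (Sum.inr b))),
        Fintype.sum_sum_type]
      simp [hA11, hA12, hA21, hA22, hD12def]
    have hA0 : Amat (finSumFinEquiv (Sum.inl a)) (finSumFinEquiv (Sum.inr b)) = 0 := by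
      rw [hAmat (Sum.inl a) (Sum.inr b)]
      simp
    simp only [Matrix.sub_apply, Matrix.add_apply, Matrix.smul_apply, Matrix.map_apply,
      Matrix.zero_apply, smul_eq_mul] at hE ⊢
    rw [hmulAC, hmulCA, hA0, dS_zero, mul_zero, add_zero] at hE
    have hentry : Cm (finSumFinEquiv (Sum.inl a)) (finSumFinEquiv (Sum.inr b)) = D12 a b := rfl
    rw [hentry] at hE
    linear_combination hE
  have hsep' : ∀ i j, constantCoeff (b₂ i - b₁ j) ≠ 0 := by
    intro i j h
    apply hsep j i
    rw [map_sub] at h ⊢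
    linear_combination -h
  have h21 : D21 = 0 := by
    apply block_vanish hk A₂ A₁ b₂ b₁ hchar₂ hchar₁ hsep' (N := N)
    apply Matrix.ext
    intro a b
    have hE := Matrix.ext_iff.mpr hflat (finSumFinEquiv (Sum.inr a)) (finSumFinEquiv (Sum.inl b))
    have hmulAC : (Amat * Cm) (finSumFinEquiv (Sum.inr a)) (finSumFinEquiv (Sum.inl b))
        = (A₂ * D21) a b := by
      rw [Matrix.mul_apply, Matrix.mul_apply,
        ← Equiv.sum_comp finSumFinEquiv
          (fun x => Amat (finSumFinEquiv (Sum.inr a)) x * Cm x (finSumFinEquiv (Sum.inl b))),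
        Fintype.sum_sum_type]
      simp [hA11, hA12, hA21, hA22, hD21def]
    have hmulCA : (Cm * Amat) (finSumFinEquiv (Sum.inr a)) (finSumFinEquiv (Sum.inl b))
        = (D21 * A₁) a b := by
      rw [Matrix.mul_apply, Matrix.mul_apply,
        ← Equiv.sum_comp finSumFinEquiv
          (fun x => Cm (finSumFinEquiv (Sum.inr a)) x * Amat x (finSumFinEquiv (Sum.inl b))),
        Fintype.sum_sum_type]
      simp [hA11, hA12, hA21, hA22, hD21def]
    have hA0 : Amat (finSumFinEquiv (Sum.inr a)) (finSumFinEquiv (Sum.inl b)) = 0 := by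
      rw [hAmat (Sum.inr a) (Sum.inl b)]
      simp
    simp only [Matrix.sub_apply, Matrix.add_apply, Matrix.smul_apply, Matrix.map_apply,
      Matrix.zero_apply, smul_eq_mul] at hE ⊢
    rw [hmulAC, hmulCA, hA0, dS_zero, mul_zero, add_zero] at hE
    have hentry : Cm (finSumFinEquiv (Sum.inr a)) (finSumFinEquiv (Sum.inl b)) = D21 a b := rfl
    rw [hentry] at hE
    linear_combination hE
  intro i j
  constructor
  · simpa [hD12def] using Matrix.ext_iff.mpr h12 i j
  · simpa [hD21def] using Matrix.ext_iff.mpr h21 j i
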